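/- Fix q ∈ ℝ. Let φ : ℝ → ℝ be a continuous, odd, 2π-periodic function, and let w : ℝ → ℝ be a C², 2π-periodic function with zero mean (∫₀^{2π} w(τ)dτ = 0) satisfying ẅ(τ) = V'(φ(τ+2q)) − V'(−φ(τ)) for all τ ∈ ℝ. Then w(τ) = −w(−τ−2q) for all τ ∈ ℝ. -/

import Mathlib

open Real

/-- Hertzian force: `V'(x) = -(max(-x,0))^(3/2)`. -/
noncomputable def V' (x : ℝ) : ℝ := -(max (-x) 0) ^ ((3:ℝ)/2)

/-- The antisymmetry reduction (reduction-w) for the first-order correction of the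
travelling wave: a zero-mean periodic solution of `ẅ = V'(φ(·+2q)) - V'(-φ)`
satisfies `w(τ) = -w(-τ-2q)`. -/
theorem antisymmetry_of_first_order_correction
    (q : ℝ) (φ : ℝ → ℝ) (hφc : Continuous φ)
    (hφodd : ∀ τ, φ (-τ) = -φ τ)
    (hφper : Function.Periodic φ (2 * π))
    (w : ℝ → ℝ) (hw : ContDiff ℝ 2 w)
    (hwper : Function.Periodic w (2 * π))
    (hmean : (∫ τ in (0:ℝ)..(2 * π), w τ) = 0)
    (hode : ∀ τ, deriv (deriv w) τ = V' (φ (τ + 2 * q)) - V' (-φ τ)) :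
    ∀ τ, w τ = -w (-τ - 2 * q) := by
  have hw1 : Differentiable ℝ w := hw.differentiable (by norm_num)
  have hw2 : Differentiable ℝ (deriv w) := by
    have h : ContDiff ℝ ((1:ℕ)+1) w := by exact_mod_cast hw
    exact ((contDiff_succ_iff_deriv.mp h).2.2).differentiable (by norm_num)
  have hinner : ∀ τ : ℝ, HasDerivAt (fun s : ℝ => -s - 2*q) (-1) τ := by
    intro τ
    simpa using ((hasDerivAt_id τ).neg.sub_const (2*q))
  set g : ℝ → ℝ := fun τ => w τ + w (-τ - 2*q) with hg
  set g' : ℝ → ℝ := fun τ => deriv w τ - deriv w (-τ - 2*q) with hg'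
  have hg1 : ∀ τ, HasDerivAt g (g' τ) τ := by
    intro τ
    have h2 : HasDerivAt (fun s : ℝ => w (-s - 2*q)) (deriv w (-τ - 2*q) * (-1)) τ :=
      ((hw1 (-τ - 2*q)).hasDerivAt).comp τ (hinner τ)
    have := ((hw1 τ).hasDerivAt).add h2
    simpa [g, g', mul_comm, sub_eq_add_neg, Pi.add_def] using this
  have hzero : ∀ τ, deriv (deriv w) τ + deriv (deriv w) (-τ - 2*q) = 0 := by
    intro τ
    rw [hode, hode]
    have e1 : -τ - 2*q + 2*q = -τ := by ring
    have e2 : (-τ - 2*q) = -(τ + 2*q) := by ring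
    rw [e1, hφodd, e2, hφodd, neg_neg]
    ring
  have hg2 : ∀ τ, HasDerivAt g' 0 τ := by
    intro τ
    have h2 : HasDerivAt (fun s : ℝ => deriv w (-s - 2*q)) (deriv (deriv w) (-τ - 2*q) * (-1)) τ :=
      by have := ((hw2 (-τ - 2*q)).hasDerivAt).comp τ (hinner τ); exact this
    have := ((hw2 τ).hasDerivAt).sub h2
    have h0 : deriv (deriv w) τ - deriv (deriv w) (-τ - 2*q) * (-1) = 0 := by
      have := hzero τ; linarith
    rw [h0] at this
    exact this
  -- g' is constant
  have hg'const : ∀ τ, g' τ = g' 0 := by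
    intro τ
    exact is_const_of_deriv_eq_zero (fun x => (hg2 x).differentiableAt)
      (fun x => (hg2 x).deriv) τ 0
  -- g τ = g 0 + g' 0 * τ
  have haff : ∀ τ, g τ = g 0 + g' 0 * τ := by
    intro τ
    have hh : ∀ x, HasDerivAt (fun s => g s - g' 0 * s) 0 x := by
      intro x
      have := (hg1 x).sub ((hasDerivAt_id x).const_mul (g' 0))
      simpa [hg'const x, Pi.sub_def] using this
    have := is_const_of_deriv_eq_zero (fun x => (hh x).differentiableAt)
      (fun x => (hh x).deriv) τ 0
    simp at this
    linarith
  -- g is periodic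
  have hgper : g (2*π) = g 0 := by
    have h1 : w (0 + 2*π) = w 0 := hwper 0
    have h2 : w (-(2*π) - 2*q) = w (-2*q) := by
      have := hwper (-(2*π) - 2*q)
      have e : -(2*π) - 2*q + 2*π = -2*q := by ring
      rw [e] at this
      rw [← this]
    simp only [g]
    rw [h2]
    simpa using h1
  have hc : g' 0 = 0 := by
    have := haff (2*π)
    rw [hgper] at this
    have hπ : (2:ℝ)*π ≠ 0 := by positivity
    have : g' 0 * (2*π) = 0 := by linarith
    exact (mul_eq_zero.mp this).resolve_right hπ
  -- integral of second term
  have hint2 : (∫ τ in (0:ℝ)..(2*π), w (-τ - 2*q)) = 0 := by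
    have h1 : (∫ τ in (0:ℝ)..(2*π), w (-τ - 2*q))
        = ∫ s in (-(2*π))..(0:ℝ), w (s - 2*q) := by
      have := intervalIntegral.integral_comp_neg (a := (0:ℝ)) (b := 2*π)
        (f := fun s => w (s - 2*q))
      simpa [sub_eq_add_neg] using this
    have h2 : (∫ s in (-(2*π))..(0:ℝ), w (s - 2*q))
        = ∫ s in (-(2*π) - 2*q)..(-(2*q)), w s := by
      have := intervalIntegral.integral_comp_sub_right (a := -(2*π)) (b := (0:ℝ))
        (f := w) (2*q)
      simpa using this
    have h3 : (∫ s in (-(2*π) - 2*q)..(-(2*q)), w s)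
        = ∫ s in (0:ℝ)..(2*π), w s := by
      have := hwper.intervalIntegral_add_eq (-(2*π) - 2*q) 0
      have e : -(2*π) - 2*q + 2*π = -(2*q) := by ring
      rw [e] at this
      simpa using this
    rw [h1, h2, h3, hmean]
  have hintg : (∫ τ in (0:ℝ)..(2*π), g τ) = 2*π * g 0 := by
    have : (∫ τ in (0:ℝ)..(2*π), g τ) = ∫ τ in (0:ℝ)..(2*π), g 0 := by
      apply intervalIntegral.integral_congr
      intro x _
      rw [haff x, hc]; ring
    rw [this, intervalIntegral.integral_const, smul_eq_mul, sub_zero]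
  have hintg' : (∫ τ in (0:ℝ)..(2*π), g τ) = 0 := by
    have hi1 : IntervalIntegrable w MeasureTheory.volume 0 (2*π) :=
      (hw1.continuous).intervalIntegrable 0 (2*π)
    have hi2 : IntervalIntegrable (fun τ => w (-τ - 2*q)) MeasureTheory.volume 0 (2*π) :=
      ((hw1.continuous).comp (by continuity)).intervalIntegrable 0 (2*π)
    have : (∫ τ in (0:ℝ)..(2*π), g τ)
        = (∫ τ in (0:ℝ)..(2*π), w τ) + ∫ τ in (0:ℝ)..(2*π), w (-τ - 2*q) :=
      intervalIntegral.integral_add hi1 hi2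
    rw [this, hmean, hint2]; ring
  have hg0 : g 0 = 0 := by
    have hπ : (2:ℝ)*π ≠ 0 := by positivity
    rw [hintg'] at hintg
    exact (mul_eq_zero.mp hintg.symm).resolve_left hπ
  intro τ
  have := haff τ
  rw [hc, hg0] at this
  have : g τ = 0 := by linarith
  simp only [g] at this
  linarith
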